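/- Let L be a distributive lattice, n a positive integer, and x_1,...,x_n ∈ L. The set {x_1,...,x_n} is totally ordered (i.e., any two of the x_i are comparable) if and only if the set {M_1(x_1,...,x_n), M_2(x_1,...,x_n), ..., M_n(x_1,...,x_n)} equals the set {x_1,...,x_n}. -/

import Mathlib

open Finset

/-- `Mk x k` is `M_{k+1}(x_1,...,x_n)` (`k : Fin n` represents the 1-indexed index `k+1`):
the supremum over all subsets `I` of `{1,...,n}` of cardinality `n + 1 - (k+1) = n - k` of
the infima `⋀_{i ∈ I} x i`. -/
def Mk {L : Type*} [Lattice L] {n : ℕ} (x : Fin n → L) (k : Fin n) : L :=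
  ((univ : Finset (Fin n)).powersetCard (n - k.val)).attach.sup'
    (attach_nonempty_iff.mpr (powersetCard_nonempty.mpr (by simp)))
    fun I => I.1.inf' (card_pos.mp (by
      have h := (mem_powersetCard.mp I.2).2
      have hk := k.isLt
      omega)) x


lemma exists_eq_sup'_of_chain {L : Type*} [SemilatticeSup L] {ι : Type*} {s : Finset ι}
    (hs : s.Nonempty) (f : ι → L)
    (hf : ∀ i ∈ s, ∀ j ∈ s, f i ≤ f j ∨ f j ≤ f i) :
    ∃ a ∈ s, s.sup' hs f = f a := by
  revert hf
  induction hs using Finset.Nonempty.cons_induction with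
  | singleton i => intro hf; exact ⟨i, mem_singleton_self i, by simp⟩
  | cons i s hi hne ih =>
    intro hf
    obtain ⟨a, ha, hA⟩ := ih (fun p hp q hq =>
      hf p (mem_cons_of_mem hp) q (mem_cons_of_mem hq))
    rw [sup'_cons hne]
    rcases hf i (mem_cons_self i s) a (mem_cons_of_mem ha) with h | h
    · exact ⟨a, mem_cons_of_mem ha, by rw [hA]; exact sup_eq_right.mpr h⟩
    · exact ⟨i, mem_cons_self i s, by rw [hA]; exact sup_eq_left.mpr h⟩

lemma exists_eq_inf'_of_chain {L : Type*} [SemilatticeInf L] {ι : Type*} {s : Finset ι}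
    (hs : s.Nonempty) (f : ι → L)
    (hf : ∀ i ∈ s, ∀ j ∈ s, f i ≤ f j ∨ f j ≤ f i) :
    ∃ a ∈ s, s.inf' hs f = f a := by
  obtain ⟨a, ha, hA⟩ := exists_eq_sup'_of_chain (L := Lᵒᵈ) hs f
    (fun i hi j hj => (hf i hi j hj).symm)
  exact ⟨a, ha, hA⟩

lemma Mk_mono {L : Type*} [Lattice L] {n : ℕ} (x : Fin n → L) {k k' : Fin n}
    (hkk : k ≤ k') : Mk x k ≤ Mk x k' := by
  apply sup'_le
  rintro ⟨I, hI⟩ -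
  obtain ⟨hIu, hIc⟩ := mem_powersetCard.mp hI
  have hcard : n - k'.val ≤ I.card := by
    have := k.isLt
    omega
  obtain ⟨I', hI'I, hI'c⟩ := Finset.exists_subset_card_eq hcard
  have hI'mem : I' ∈ (univ : Finset (Fin n)).powersetCard (n - k'.val) :=
    mem_powersetCard.mpr ⟨subset_univ _, hI'c⟩
  refine le_trans ?_ (le_sup' _ (mem_attach _ ⟨I', hI'mem⟩))
  apply le_inf'
  intro j hj
  exact inf'_le _ (hI'I hj)

/-- The set `{x_1,...,x_n}` is totally ordered if and only if the total orderization
`{M_1(x_1,...,x_n),...,M_n(x_1,...,x_n)}` equals `{x_1,...,x_n}` as a set. -/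
theorem statement5 {L : Type*} [DistribLattice L] {n : ℕ} (hn : 0 < n)
    (x : Fin n → L) :
    (∀ i j : Fin n, x i ≤ x j ∨ x j ≤ x i) ↔
      Set.range (fun k => Mk x k) = Set.range x := by
  classical
  constructor
  · intro hchain
    apply Set.eq_of_subset_of_subset
    · rintro _ ⟨k, rfl⟩
      -- Mk x k ∈ range x
      have hinf : ∀ I : {I // I ∈ (univ : Finset (Fin n)).powersetCard (n - k.val)},
          ∃ a, (I.1.inf' (card_pos.mp (by
            have h := (mem_powersetCard.mp I.2).2
            have hk := k.isLt
            omega)) x) = x a := by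
        rintro ⟨I, hI⟩
        obtain ⟨a, _, ha⟩ := exists_eq_inf'_of_chain _ x (fun i _ j _ => hchain i j)
        exact ⟨a, ha⟩
      obtain ⟨J, _, hJ⟩ := exists_eq_sup'_of_chain
        (attach_nonempty_iff.mpr (powersetCard_nonempty.mpr (by simp)))
        (fun I : {I // I ∈ (univ : Finset (Fin n)).powersetCard (n - k.val)} =>
          I.1.inf' (card_pos.mp (by
            have h := (mem_powersetCard.mp I.2).2
            have hk := k.isLt
            omega)) x)
        (by
          intro I _ J _
          obtain ⟨a, ha⟩ := hinf I
          obtain ⟨b, hb⟩ := hinf J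
          rw [ha, hb]
          exact hchain a b)
      obtain ⟨a, ha⟩ := hinf J
      exact ⟨a, by rw [← ha, ← hJ]; rfl⟩
    · rintro _ ⟨j, rfl⟩
      set S : Finset (Fin n) := univ.filter (fun i => x j ≤ x i) with hS
      have hjS : j ∈ S := by simp [hS]
      have hScard : 1 ≤ S.card := card_pos.mpr ⟨j, hjS⟩
      have hSle : S.card ≤ n := le_trans (card_le_card (subset_univ S)) (by simp)
      refine ⟨⟨n - S.card, by omega⟩, ?_⟩
      have hnk : n - (n - S.card) = S.card := by omega
      apply le_antisymm
      · apply sup'_le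
        rintro ⟨I, hI⟩ -
        obtain ⟨-, hIc⟩ := mem_powersetCard.mp hI
        simp only [hnk] at hIc
        -- there exists i ∈ I with x i ≤ x j
        by_contra hcon
        have hne : I.Nonempty := card_pos.mp (by omega)
        have hsub : I ⊆ S.erase j := by
          intro i hi
          have h1 : ¬ x i ≤ x j := by
            intro hle
            exact absurd (inf'_le x hi |>.trans hle) (by
              simpa using hcon)
          have h2 : x j ≤ x i := (hchain i j).resolve_left h1
          refine mem_erase.mpr ⟨?_, mem_filter.mpr ⟨mem_univ _, h2⟩⟩
          rintro rfl
          exact h1 le_rfl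
        have := card_le_card hsub
        rw [card_erase_of_mem hjS] at this
        omega
      · have hSmem : S ∈ (univ : Finset (Fin n)).powersetCard (n - (⟨n - S.card, by omega⟩ : Fin n).val) := by
          refine mem_powersetCard.mpr ⟨subset_univ _, ?_⟩
          simp [hnk]
        refine le_trans ?_ (le_sup' _ (mem_attach _ ⟨S, hSmem⟩))
        apply le_inf'
        intro i hi
        exact (mem_filter.mp hi).2
  · intro h i j
    have hi : x i ∈ Set.range (fun k => Mk x k) := h ▸ Set.mem_range_self i
    have hj : x j ∈ Set.range (fun k => Mk x k) := h ▸ Set.mem_range_self j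
    obtain ⟨k₁, hk₁⟩ := hi
    obtain ⟨k₂, hk₂⟩ := hj
    rcases le_total k₁ k₂ with hle | hle
    · exact Or.inl (hk₁ ▸ hk₂ ▸ Mk_mono x hle)
    · exact Or.inr (hk₂ ▸ hk₁ ▸ Mk_mono x hle)
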